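/- For every natural number n ≥ 4 and every k ∈ {0, 1, 2}, there exists an ((n − k) × n, n)-near triple array and an ((n − k) × (n − 1), n)-near triple array. -/

import Mathlib

open Finset

/-- An `r × c` row-column design on `v` symbols is binary if no symbol occurs
twice in any row or in any column. -/
def IsBinaryDesign {r c v : ℕ} (T : Fin r × Fin c → Fin v) : Prop :=
  (∀ (i : Fin r) (j j' : Fin c), j ≠ j' → T (i, j) ≠ T (i, j')) ∧
  (∀ (j : Fin c) (i i' : Fin r), i ≠ i' → T (i, j) ≠ T (i', j))

/-- The replication number of a symbol `s`: the number of cells containing `s`. -/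
def replNum {r c v : ℕ} (T : Fin r × Fin c → Fin v) (s : Fin v) : ℕ :=
  (Finset.univ.filter (fun p : Fin r × Fin c => T p = s)).card

/-- The average replication number `e = rc/v` as a rational number. -/
def avgRepl (r c v : ℕ) : ℚ := ((r : ℚ) * (c : ℚ)) / (v : ℚ)

/-- A design is equireplicate if `e = rc/v` is an integer and every symbol has
replication number `e`. -/
def IsEquireplicate {r c v : ℕ} (T : Fin r × Fin c → Fin v) : Prop :=
  (avgRepl r c v).den = 1 ∧ ∀ s : Fin v, (replNum T s : ℚ) = avgRepl r c v

/-- A design is near equireplicate if `e = rc/v` is not an integer and every symbol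
has replication number `⌊e⌋` or `⌈e⌉`. -/
def IsNearEquireplicate {r c v : ℕ} (T : Fin r × Fin c → Fin v) : Prop :=
  (avgRepl r c v).den ≠ 1 ∧
  ∀ s : Fin v, (replNum T s : ℤ) = ⌊avgRepl r c v⌋ ∨ (replNum T s : ℤ) = ⌈avgRepl r c v⌉

/-- The set of symbols occurring in row `i`. -/
def rowSet {r c v : ℕ} (T : Fin r × Fin c → Fin v) (i : Fin r) : Finset (Fin v) :=
  Finset.univ.image (fun j : Fin c => T (i, j))

/-- The set of symbols occurring in column `j`. -/
def colSet {r c v : ℕ} (T : Fin r × Fin c → Fin v) (j : Fin c) : Finset (Fin v) :=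
  Finset.univ.image (fun i : Fin r => T (i, j))

/-- Average row-column intersection size `λ_rc`. -/
def lamRC {r c v : ℕ} (T : Fin r × Fin c → Fin v) : ℚ :=
  (∑ i : Fin r, ∑ j : Fin c, ((rowSet T i ∩ colSet T j).card : ℚ)) / ((r : ℚ) * (c : ℚ))

/-- Average row-row intersection size `λ_rr`. -/
def lamRR {r c v : ℕ} (T : Fin r × Fin c → Fin v) : ℚ :=
  (∑ p ∈ Finset.univ.filter (fun p : Fin r × Fin r => p.1 < p.2),
      ((rowSet T p.1 ∩ rowSet T p.2).card : ℚ)) / ((r : ℚ) * ((r : ℚ) - 1) / 2)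

/-- Average column-column intersection size `λ_cc`. -/
def lamCC {r c v : ℕ} (T : Fin r × Fin c → Fin v) : ℚ :=
  (∑ p ∈ Finset.univ.filter (fun p : Fin c × Fin c => p.1 < p.2),
      ((colSet T p.1 ∩ colSet T p.2).card : ℚ)) / ((c : ℚ) * ((c : ℚ) - 1) / 2)

/-- An `(r × c, v)`-near triple array. -/
def IsNearTripleArray {r c v : ℕ} (T : Fin r × Fin c → Fin v) : Prop :=
  IsBinaryDesign T ∧ (IsEquireplicate T ∨ IsNearEquireplicate T) ∧
  (∀ (i : Fin r) (j : Fin c),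
    ((rowSet T i ∩ colSet T j).card : ℤ) = ⌊lamRC T⌋ ∨
    ((rowSet T i ∩ colSet T j).card : ℤ) = ⌈lamRC T⌉) ∧
  (∀ i j : Fin r, i ≠ j →
    ((rowSet T i ∩ rowSet T j).card : ℤ) = ⌊lamRR T⌋ ∨
    ((rowSet T i ∩ rowSet T j).card : ℤ) = ⌈lamRR T⌉) ∧
  (∀ i j : Fin c, i ≠ j →
    ((colSet T i ∩ colSet T j).card : ℤ) = ⌊lamCC T⌋ ∨
    ((colSet T i ∩ colSet T j).card : ℤ) = ⌈lamCC T⌉)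

section NTAAux


lemma addmod_cancel {n a w w' : ℕ} (hw : w < n) (hw' : w' < n)
    (h : (w + a) % n = (w' + a) % n) : w = w' := by
  have h2 : w % n = w' % n := Nat.ModEq.add_right_cancel' a h
  rwa [Nat.mod_eq_of_lt hw, Nat.mod_eq_of_lt hw'] at h2

lemma addmod_cancel_left {n a b w : ℕ} (ha : a < n) (hb : b < n)
    (h : (w + a) % n = (w + b) % n) : a = b := by
  rw [add_comm w a, add_comm w b] at h
  exact addmod_cancel ha hb h

lemma e_add {n x a : ℕ} (hx : x < n) (ha : a ≤ n) :
    (((x + n - a) % n) + a) % n = x := by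
  have h1 : x + n - a + a = x + n := by omega
  rw [Nat.mod_add_mod, h1, Nat.add_mod_right, Nat.mod_eq_of_lt hx]

lemma exists_addmod_iff {n x a b : ℕ} (hn : 0 < n) (hx : x < n) (ha : a ≤ n) (hb : b ≤ n) :
    (∃ w, w < b ∧ (w + a) % n = x) ↔ (x + n - a) % n < b := by
  constructor
  · rintro ⟨w, hwb, hw⟩
    have hww : w = (x + n - a) % n :=
      addmod_cancel (lt_of_lt_of_le hwb hb) (Nat.mod_lt _ hn)
        (by rw [hw, e_add hx ha])
    omega
  · intro h
    exact ⟨_, h, e_add hx ha⟩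

lemma mod_contra {n : ℕ} (h4 : 4 ≤ n) {a b : ℕ}
    (h1 : (n - 2 + a) % n = (n - 1 + b) % n)
    (h2 : (n - 1 + a) % n = (n - 2 + b) % n) : False := by
  haveI : NeZero n := ⟨by omega⟩
  have e1 : ((n - 2 + a : ℕ) : ZMod n) = ((n - 1 + b : ℕ) : ZMod n) := by
    rw [← ZMod.natCast_mod, h1, ZMod.natCast_mod]
  have e2 : ((n - 1 + a : ℕ) : ZMod n) = ((n - 2 + b : ℕ) : ZMod n) := by
    rw [← ZMod.natCast_mod, h2, ZMod.natCast_mod]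
  have c1 : ((n - 2 : ℕ) : ZMod n) = -2 := by
    rw [Nat.cast_sub (by omega : 2 ≤ n)]
    simp
  have c2 : ((n - 1 : ℕ) : ZMod n) = -1 := by
    rw [Nat.cast_sub (by omega : 1 ≤ n)]
    simp
  push_cast at e1 e2
  rw [c1, c2] at e1 e2
  have h20 : ((2 : ℕ) : ZMod n) = 0 := by
    push_cast
    linear_combination e2 - e1
  have hdvd : n ∣ 2 := (ZMod.natCast_eq_zero_iff 2 n).1 h20
  have := Nat.le_of_dvd (by norm_num) hdvd
  omega

/-- Average sandwich lemma. -/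
lemma avg_floor_ceil {α : Type*} (S : Finset α) (f : α → ℕ) (a : ℕ)
    (h : ∀ x ∈ S, f x = a ∨ f x = a + 1) {x : α} (hx : x ∈ S) :
    (f x : ℤ) = ⌊(∑ y ∈ S, (f y : ℚ)) / (S.card : ℚ)⌋ ∨
      (f x : ℤ) = ⌈(∑ y ∈ S, (f y : ℚ)) / (S.card : ℚ)⌉ := by
  classical
  set L : ℚ := (∑ y ∈ S, (f y : ℚ)) / (S.card : ℚ) with hL
  have hcard : 0 < (S.card : ℚ) := by
    exact_mod_cast card_pos.2 ⟨x, hx⟩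
  have hsum : (∑ y ∈ S, (f y : ℚ)) = f x + ∑ y ∈ S.erase x, (f y : ℚ) :=
    (Finset.add_sum_erase S _ hx).symm
  have hecard : ((S.erase x).card : ℚ) = (S.card : ℚ) - 1 := by
    rw [Finset.card_erase_of_mem hx]
    have : 1 ≤ S.card := card_pos.2 ⟨x, hx⟩
    push_cast [this]
    ring
  have hub : ∀ y ∈ S, (f y : ℚ) ≤ a + 1 := by
    intro y hy; rcases h y hy with h' | h' <;> rw [h'] <;> push_cast <;> linarith
  have hlb : ∀ y ∈ S, (a : ℚ) ≤ f y := by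
    intro y hy; rcases h y hy with h' | h' <;> rw [h'] <;> push_cast <;> linarith
  rcases h x hx with hfx | hfx
  · left
    rw [hfx]
    symm
    rw [Int.floor_eq_iff]
    constructor
    · push_cast
      rw [hL, le_div_iff₀ hcard]
      calc (a : ℚ) * S.card = ∑ _y ∈ S, (a : ℚ) := by rw [Finset.sum_const, nsmul_eq_mul]; ring
        _ ≤ _ := Finset.sum_le_sum hlb
    · push_cast
      rw [hL, div_lt_iff₀ hcard]
      have h1 : ∑ y ∈ S.erase x, (f y : ℚ) ≤ (S.card - 1) * (a + 1) := by
        calc ∑ y ∈ S.erase x, (f y : ℚ) ≤ ∑ _y ∈ S.erase x, ((a : ℚ) + 1) :=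
              Finset.sum_le_sum (fun y hy => hub y (Finset.mem_of_mem_erase hy))
          _ = (S.card - 1) * (a + 1) := by rw [Finset.sum_const, nsmul_eq_mul, hecard]
      rw [hsum, hfx]
      push_cast
      nlinarith
  · right
    rw [hfx]
    symm
    rw [Int.ceil_eq_iff]
    constructor
    · push_cast
      rw [hL, lt_div_iff₀ hcard]
      have h1 : (S.card - 1) * (a : ℚ) ≤ ∑ y ∈ S.erase x, (f y : ℚ) := by
        calc ((S.card : ℚ) - 1) * a = ∑ _y ∈ S.erase x, (a : ℚ) := by
              rw [Finset.sum_const, nsmul_eq_mul, hecard]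
          _ ≤ _ := Finset.sum_le_sum (fun y hy => hlb y (Finset.mem_of_mem_erase hy))
      rw [hsum, hfx]
      push_cast
      nlinarith
    · push_cast
      rw [hL, div_le_iff₀ hcard]
      calc (∑ y ∈ S, (f y : ℚ)) ≤ ∑ _y ∈ S, ((a: ℚ) + 1) := Finset.sum_le_sum hub
        _ = (a + 1) * S.card := by rw [Finset.sum_const, nsmul_eq_mul]; ring

lemma avg_eq_of_den_one {α : Type*} (S : Finset α) (f : α → ℕ) (a : ℕ)
    (h : ∀ x ∈ S, f x = a ∨ f x = a + 1)
    (hden : ((∑ y ∈ S, (f y : ℚ)) / (S.card : ℚ)).den = 1) {x : α} (hx : x ∈ S) :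
    (f x : ℚ) = (∑ y ∈ S, (f y : ℚ)) / (S.card : ℚ) := by
  obtain ⟨m, hm⟩ : ∃ m : ℤ, (m : ℚ) = (∑ y ∈ S, (f y : ℚ)) / (S.card : ℚ) :=
    ⟨_, (Rat.den_eq_one_iff _).1 hden⟩
  rcases avg_floor_ceil S f a h hx with h' | h' <;> rw [← hm] at h' ⊢
  · rw [Int.floor_intCast] at h'; exact_mod_cast h'
  · rw [Int.ceil_intCast] at h'; exact_mod_cast h'

lemma two_mul_card_lt (m : ℕ) :
    2 * ((univ.filter (fun p : Fin m × Fin m => p.1 < p.2)).card) = m * m - m := by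
  classical
  have hswap : ((univ : Finset (Fin m × Fin m)).filter (fun p => p.1 < p.2)).card
      = ((univ : Finset (Fin m × Fin m)).filter (fun p => p.2 < p.1)).card := by
    apply Finset.card_bij' (fun p _ => p.swap) (fun p _ => p.swap) <;> simp [Prod.ext_iff]
  have hdisj : Disjoint ((univ : Finset (Fin m × Fin m)).filter (fun p => p.1 < p.2))
      ((univ : Finset (Fin m × Fin m)).filter (fun p => p.2 < p.1)) := by
    rw [Finset.disjoint_left]
    intro p hp hq
    simp only [mem_filter] at hp hq
    exact absurd hq.2 (not_lt.2 hp.2.le)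
  have hunion : ((univ : Finset (Fin m × Fin m)).filter (fun p => p.1 < p.2))
      ∪ ((univ : Finset (Fin m × Fin m)).filter (fun p => p.2 < p.1))
      = (univ : Finset (Fin m)).offDiag := by
    rw [← Finset.filter_or]
    ext p
    simp only [mem_filter, mem_univ, true_and, Finset.mem_offDiag]
    constructor
    · rintro (h | h)
      exacts [h.ne, h.ne']
    · exact fun h => lt_or_gt_of_ne h
  have hcard := Finset.card_union_of_disjoint hdisj
  rw [hunion, Finset.offDiag_card] at hcard
  simp only [card_univ, Fintype.card_prod, Fintype.card_fin] at hcard ⊢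
  omega



section Cyc

def cyc (n r c : ℕ) (hn : 0 < n) : Fin r × Fin c → Fin n :=
  fun p => ⟨(p.1.1 + p.2.1) % n, Nat.mod_lt _ hn⟩

variable {n r c : ℕ} (hn : 0 < n)

lemma mem_colSet_iff (hrn : r ≤ n) (hcn : c ≤ n) (j : Fin c) (x : Fin n) :
    x ∈ colSet (cyc n r c hn) j ↔ (x.1 + n - j.1) % n < r := by
  rw [← exists_addmod_iff hn x.isLt (le_of_lt (lt_of_lt_of_le j.isLt hcn)) hrn]
  simp only [colSet, mem_image, mem_univ, true_and]
  constructor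
  · rintro ⟨i, hi⟩
    exact ⟨i.1, i.isLt, by simpa [cyc, Fin.ext_iff] using hi⟩
  · rintro ⟨w, hw, h⟩
    exact ⟨⟨w, hw⟩, by simp [cyc, Fin.ext_iff, h]⟩

lemma mem_rowSet_iff (hrn : r ≤ n) (hcn : c ≤ n) (i : Fin r) (x : Fin n) :
    x ∈ rowSet (cyc n r c hn) i ↔ (x.1 + n - i.1) % n < c := by
  rw [← exists_addmod_iff hn x.isLt (le_of_lt (lt_of_lt_of_le i.isLt hrn)) hcn]
  simp only [rowSet, mem_image, mem_univ, true_and]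
  constructor
  · rintro ⟨jj, hj⟩
    exact ⟨jj.1, jj.isLt, by simpa [cyc, Fin.ext_iff, add_comm] using hj⟩
  · rintro ⟨w, hw, h⟩
    refine ⟨⟨w, hw⟩, ?_⟩
    simpa [cyc, Fin.ext_iff, add_comm] using h

lemma card_colSet (hrn : r ≤ n) (j : Fin c) :
    (colSet (cyc n r c hn) j).card = r := by
  rw [colSet, Finset.card_image_of_injOn, card_univ, Fintype.card_fin]
  intro i _ i' _ h
  simp only [cyc, Fin.ext_iff] at h
  exact Fin.ext (addmod_cancel (lt_of_lt_of_le i.isLt hrn) (lt_of_lt_of_le i'.isLt hrn) h)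

lemma card_rowSet (hcn : c ≤ n) (i : Fin r) :
    (rowSet (cyc n r c hn) i).card = c := by
  rw [rowSet, Finset.card_image_of_injOn, card_univ, Fintype.card_fin]
  intro j _ j' _ h
  simp only [cyc, Fin.ext_iff] at h
  exact Fin.ext (addmod_cancel_left (lt_of_lt_of_le j.isLt hcn) (lt_of_lt_of_le j'.isLt hcn) h)

lemma replNum_le (hrn : r ≤ n) (hcn : c ≤ n) (s : Fin n) :
    replNum (cyc n r c hn) s ≤ r := by
  rw [replNum]
  have h := Finset.card_le_card_of_injOn (f := Prod.fst)
    (s := Finset.univ.filter (fun p : Fin r × Fin c => cyc n r c hn p = s))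
    (t := (univ : Finset (Fin r))) (fun p _ => mem_univ _) ?_
  · simpa using h
  · intro p hp q hq hpq
    simp only [coe_filter, Set.mem_setOf_eq, mem_univ, true_and] at hp hq
    have h1 : (p.1.1 + p.2.1) % n = s.1 := by simpa [cyc, Fin.ext_iff] using hp
    have h2 : (q.1.1 + q.2.1) % n = s.1 := by simpa [cyc, Fin.ext_iff] using hq
    rw [← hpq] at h2
    have := addmod_cancel_left (lt_of_lt_of_le p.2.isLt hcn) (lt_of_lt_of_le q.2.isLt hcn)
      (h1.trans h2.symm)
    exact Prod.ext hpq (Fin.ext this)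
end Cyc

section Cyc2
variable {n r c : ℕ} (hn : 0 < n)

lemma replNum_ge (hrn : r ≤ n) (hcn : c ≤ n) (hc0 : 0 < c) (s : Fin n) :
    r - (n - c) ≤ replNum (cyc n r c hn) s := by
  classical
  set F := Finset.univ.filter (fun i : Fin r => (s.1 + n - i.1) % n < c) with hF
  have hstep1 : F.card ≤ replNum (cyc n r c hn) s := by
    rw [replNum]
    apply Finset.card_le_card_of_injOn
      (f := fun i : Fin r => ((i, ⟨(s.1 + n - i.1) % n % c, Nat.mod_lt _ hc0⟩) : Fin r × Fin c))
    · intro i hi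
      simp only [hF, mem_coe, mem_filter, mem_univ, true_and] at hi
      simp only [mem_coe, mem_filter, mem_univ, true_and]
      have hmod : (s.1 + n - i.1) % n % c = (s.1 + n - i.1) % n := Nat.mod_eq_of_lt hi
      apply Fin.ext
      show (i.1 + (s.1 + n - i.1) % n % c) % n = s.1
      rw [hmod, add_comm]
      exact e_add s.isLt (le_of_lt (lt_of_lt_of_le i.isLt hrn))
    · intro i _ i' _ h
      exact congrArg Prod.fst h
  have hstep2 : (Finset.univ.filter (fun i : Fin r => ¬ ((s.1 + n - i.1) % n < c))).card ≤ n - c := by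
    have h := Finset.card_le_card_of_injOn (f := fun i : Fin r => (s.1 + n - i.1) % n)
      (s := Finset.univ.filter (fun i : Fin r => ¬ ((s.1 + n - i.1) % n < c)))
      (t := Finset.Ico c n) ?_ ?_
    · simpa [Nat.card_Ico] using h
    · intro i hi
      simp only [mem_coe, mem_filter, mem_univ, true_and, not_lt] at hi
      exact Finset.mem_Ico.2 ⟨hi, Nat.mod_lt _ hn⟩
    · intro i hi i' hi' h
      have e1 : ((s.1 + n - i.1) % n + i.1) % n = s.1 :=
        e_add s.isLt (le_of_lt (lt_of_lt_of_le i.isLt hrn))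
      have e2 : ((s.1 + n - i'.1) % n + i'.1) % n = s.1 :=
        e_add s.isLt (le_of_lt (lt_of_lt_of_le i'.isLt hrn))
      have h' : (s.1 + n - i.1) % n = (s.1 + n - i'.1) % n := h
      rw [← h'] at e2
      exact Fin.ext (addmod_cancel_left (lt_of_lt_of_le i.isLt hrn)
        (lt_of_lt_of_le i'.isLt hrn) (e1.trans e2.symm))
  have hsplit := Finset.card_filter_add_card_filter_not
    (s := (univ : Finset (Fin r))) (fun i : Fin r => (s.1 + n - i.1) % n < c)
  simp only [card_univ, Fintype.card_fin] at hsplit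
  rw [← hF] at hsplit
  omega

lemma colCompl_inter_card_le (h4 : 4 ≤ n) (hr2 : n - 2 ≤ r) (hrn : r ≤ n) (hcn : c ≤ n)
    {j j' : Fin c} (hjj : j ≠ j') :
    (((colSet (cyc n r c hn) j)ᶜ : Finset (Fin n)) ∩ (colSet (cyc n r c hn) j')ᶜ).card ≤ 1 := by
  rw [Finset.card_le_one]
  intro x hx y hy
  simp only [mem_inter, mem_compl, mem_colSet_iff hn hrn hcn, not_lt] at hx hy
  have hjn : j.1 < n := lt_of_lt_of_le j.isLt hcn
  have hj'n : j'.1 < n := lt_of_lt_of_le j'.isLt hcn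
  -- the four "positions"
  have exj : ((x.1 + n - j.1) % n + j.1) % n = x.1 := e_add x.isLt (le_of_lt hjn)
  have exj' : ((x.1 + n - j'.1) % n + j'.1) % n = x.1 := e_add x.isLt (le_of_lt hj'n)
  have eyj : ((y.1 + n - j.1) % n + j.1) % n = y.1 := e_add y.isLt (le_of_lt hjn)
  have eyj' : ((y.1 + n - j'.1) % n + j'.1) % n = y.1 := e_add y.isLt (le_of_lt hj'n)
  by_cases h1 : (x.1 + n - j.1) % n = (y.1 + n - j.1) % n
  · apply Fin.ext
    rw [← exj, ← eyj, h1]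
  by_cases h3 : (x.1 + n - j.1) % n = (x.1 + n - j'.1) % n
  · exfalso
    apply hjj
    apply Fin.ext
    have e3 : ((x.1 + n - j.1) % n + j'.1) % n = x.1 := by rw [h3]; exact exj'
    exact addmod_cancel_left hjn hj'n (exj.trans e3.symm)
  · exfalso
    by_cases h2 : (x.1 + n - j'.1) % n = (y.1 + n - j'.1) % n
    · -- then x = y via j', contradicting h1
      apply h1
      have hxy : x.1 = y.1 := by rw [← exj', ← eyj', h2]
      rw [hxy]
    have b1 : (x.1 + n - j.1) % n < n := Nat.mod_lt _ hn
    have b2 : (y.1 + n - j.1) % n < n := Nat.mod_lt _ hn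
    have b3 : (x.1 + n - j'.1) % n < n := Nat.mod_lt _ hn
    have b4 : (y.1 + n - j'.1) % n < n := Nat.mod_lt _ hn
    have hcases : ((x.1 + n - j.1) % n = n - 2 ∧ (y.1 + n - j.1) % n = n - 1 ∧
          (x.1 + n - j'.1) % n = n - 1 ∧ (y.1 + n - j'.1) % n = n - 2) ∨
        ((x.1 + n - j.1) % n = n - 1 ∧ (y.1 + n - j.1) % n = n - 2 ∧
          (x.1 + n - j'.1) % n = n - 2 ∧ (y.1 + n - j'.1) % n = n - 1) := by
      omega
    rcases hcases with ⟨q1, q2, q3, q4⟩ | ⟨q1, q2, q3, q4⟩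
    · rw [q1] at exj; rw [q2] at eyj; rw [q3] at exj'; rw [q4] at eyj'
      exact mod_contra h4 (exj.trans exj'.symm) (eyj.trans eyj'.symm)
    · rw [q1] at exj; rw [q2] at eyj; rw [q3] at exj'; rw [q4] at eyj'
      exact mod_contra h4 (exj'.trans exj.symm) (eyj'.trans eyj.symm)
end Cyc2

section Bounds
variable {n r c : ℕ} (hn : 0 < n)

lemma rc_card (h4 : 4 ≤ n) (hr2 : n - 2 ≤ r) (hrn : r ≤ n) (hc1 : n - 1 ≤ c) (hcn : c ≤ n)
    (i : Fin r) (j : Fin c) :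
    (rowSet (cyc n r c hn) i ∩ colSet (cyc n r c hn) j).card = r - (n - c) ∨
    (rowSet (cyc n r c hn) i ∩ colSet (cyc n r c hn) j).card = r - (n - c) + 1 := by
  have hC := card_colSet hn hrn j
  have hR := card_rowSet hn hcn i
  have e1 := Finset.card_inter_add_card_sdiff (colSet (cyc n r c hn) j) (rowSet (cyc n r c hn) i)
  have e2 : (colSet (cyc n r c hn) j \ rowSet (cyc n r c hn) i).card
      ≤ ((univ : Finset (Fin n)) \ rowSet (cyc n r c hn) i).card :=
    Finset.card_le_card (Finset.sdiff_subset_sdiff (Finset.subset_univ _) (le_refl _))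
  have e3 : ((univ : Finset (Fin n)) \ rowSet (cyc n r c hn) i).card = n - c := by
    rw [Finset.card_sdiff_of_subset (Finset.subset_univ _), card_univ, Fintype.card_fin, hR]
  have e4 : (rowSet (cyc n r c hn) i ∩ colSet (cyc n r c hn) j).card
      = (colSet (cyc n r c hn) j ∩ rowSet (cyc n r c hn) i).card := by rw [Finset.inter_comm]
  omega

lemma rr_card (h4 : 4 ≤ n) (hc1 : n - 1 ≤ c) (hcn : c ≤ n) (i i' : Fin r) :
    (rowSet (cyc n r c hn) i ∩ rowSet (cyc n r c hn) i').card = 2 * c - n ∨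
    (rowSet (cyc n r c hn) i ∩ rowSet (cyc n r c hn) i').card = 2 * c - n + 1 := by
  have hR := card_rowSet hn hcn i
  have hR' := card_rowSet hn hcn i'
  have e1 := Finset.card_add_card_compl (rowSet (cyc n r c hn) i ∩ rowSet (cyc n r c hn) i')
  rw [Finset.compl_inter] at e1
  have e2 := Finset.card_union_le ((rowSet (cyc n r c hn) i)ᶜ) ((rowSet (cyc n r c hn) i')ᶜ)
  have e3 : ((rowSet (cyc n r c hn) i)ᶜ).card = n - c := by
    rw [Finset.card_compl, Fintype.card_fin, hR]
  have e4 : ((rowSet (cyc n r c hn) i')ᶜ).card = n - c := by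
    rw [Finset.card_compl, Fintype.card_fin, hR']
  have e5 : (rowSet (cyc n r c hn) i ∩ rowSet (cyc n r c hn) i').card ≤ c := by
    have := Finset.card_le_card
      (Finset.inter_subset_left :
        rowSet (cyc n r c hn) i ∩ rowSet (cyc n r c hn) i' ⊆ rowSet (cyc n r c hn) i)
    rwa [hR] at this
  simp only [Fintype.card_fin] at e1
  omega

lemma cc_card (h4 : 4 ≤ n) (hr2 : n - 2 ≤ r) (hrn : r ≤ n) (hcn : c ≤ n)
    {j j' : Fin c} (hjj : j ≠ j') :
    (colSet (cyc n r c hn) j ∩ colSet (cyc n r c hn) j').card = 2 * r - n ∨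
    (colSet (cyc n r c hn) j ∩ colSet (cyc n r c hn) j').card = 2 * r - n + 1 := by
  have hC := card_colSet hn hrn j
  have hC' := card_colSet hn hrn j'
  have key := colCompl_inter_card_le hn h4 hr2 hrn hcn hjj
  have e1 := Finset.card_add_card_compl (colSet (cyc n r c hn) j ∩ colSet (cyc n r c hn) j')
  rw [Finset.compl_inter] at e1
  have e2 := Finset.card_union_add_card_inter ((colSet (cyc n r c hn) j)ᶜ)
    ((colSet (cyc n r c hn) j')ᶜ)
  have e3 : ((colSet (cyc n r c hn) j)ᶜ).card = n - r := by
    rw [Finset.card_compl, Fintype.card_fin, hC]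
  have e4 : ((colSet (cyc n r c hn) j')ᶜ).card = n - r := by
    rw [Finset.card_compl, Fintype.card_fin, hC']
  simp only [Fintype.card_fin] at e1
  omega

lemma cyc_binary (hrn : r ≤ n) (hcn : c ≤ n) :
    (∀ (i : Fin r) (j j' : Fin c), j ≠ j' → cyc n r c hn (i, j) ≠ cyc n r c hn (i, j')) ∧
    (∀ (j : Fin c) (i i' : Fin r), i ≠ i' → cyc n r c hn (i, j) ≠ cyc n r c hn (i', j)) := by
  constructor
  · intro i j j' hne h
    simp only [cyc, Fin.ext_iff] at h
    exact hne (Fin.ext (addmod_cancel_left (lt_of_lt_of_le j.isLt hcn)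
      (lt_of_lt_of_le j'.isLt hcn) h))
  · intro j i i' hne h
    simp only [cyc, Fin.ext_iff] at h
    exact hne (Fin.ext (addmod_cancel (lt_of_lt_of_le i.isLt hrn)
      (lt_of_lt_of_le i'.isLt hrn) h))

lemma sum_replNum {v : ℕ} (T : Fin r × Fin c → Fin v) :
    ∑ s : Fin v, replNum T s = r * c := by
  classical
  have h := Finset.card_eq_sum_card_fiberwise
    (f := T) (s := (univ : Finset (Fin r × Fin c))) (t := univ) (fun x _ => mem_univ _)
  simp only [card_univ, Fintype.card_prod, Fintype.card_fin] at h
  simp only [replNum]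
  exact h.symm
end Bounds

set_option maxHeartbeats 2000000 in
theorem cyc_isNTA {n r c : ℕ} (h4 : 4 ≤ n) (hr2 : n - 2 ≤ r) (hrn : r ≤ n)
    (hc1 : n - 1 ≤ c) (hcn : c ≤ n) (hn : 0 < n) :
    IsNearTripleArray (cyc n r c hn) := by
  have hc0 : 0 < c := by omega
  refine ⟨cyc_binary hn hrn hcn, ?_, ?_, ?_, ?_⟩
  · -- replication
    have hsum : (∑ s : Fin n, (replNum (cyc n r c hn) s : ℚ)) = (r : ℚ) * c := by
      rw [← Nat.cast_sum, sum_replNum]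
      push_cast
      ring
    have hrw : avgRepl r c n = (∑ s : Fin n, (replNum (cyc n r c hn) s : ℚ))
        / (((univ : Finset (Fin n)).card : ℚ)) := by
      rw [avgRepl, hsum, card_univ, Fintype.card_fin]
    have hmem : ∀ s ∈ (univ : Finset (Fin n)),
        replNum (cyc n r c hn) s = r - (n - c) ∨
        replNum (cyc n r c hn) s = r - (n - c) + 1 := by
      intro s _
      have h1 := replNum_le hn hrn hcn s
      have h2 := replNum_ge hn hrn hcn hc0 s
      omega
    by_cases hd : (avgRepl r c n).den = 1
    · left
      refine ⟨hd, fun s => ?_⟩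
      rw [hrw]
      exact avg_eq_of_den_one _ _ _ hmem (by rw [← hrw]; exact hd) (mem_univ s)
    · right
      refine ⟨hd, fun s => ?_⟩
      rw [hrw]
      exact avg_floor_ceil _ _ _ hmem (mem_univ s)
  · -- row-column
    intro i j
    have hrw : lamRC (cyc n r c hn) = (∑ p : Fin r × Fin c,
        ((rowSet (cyc n r c hn) p.1 ∩ colSet (cyc n r c hn) p.2).card : ℚ))
        / (((univ : Finset (Fin r × Fin c)).card : ℚ)) := by
      rw [lamRC, ← Fintype.sum_prod_type']
      congr 1
      rw [card_univ, Fintype.card_prod, Fintype.card_fin, Fintype.card_fin]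
      push_cast
      ring
    have key := avg_floor_ceil (univ : Finset (Fin r × Fin c))
      (fun p : Fin r × Fin c => (rowSet (cyc n r c hn) p.1 ∩ colSet (cyc n r c hn) p.2).card)
      (r - (n - c)) (fun p _ => rc_card hn h4 hr2 hrn hc1 hcn p.1 p.2) (mem_univ (i, j))
    rw [hrw]
    exact key
  · -- row-row
    intro i i' hne
    have hrc : 0 < r := by omega
    have hrw : lamRR (cyc n r c hn) = (∑ p ∈ Finset.univ.filter
          (fun p : Fin r × Fin r => p.1 < p.2),
        ((rowSet (cyc n r c hn) p.1 ∩ rowSet (cyc n r c hn) p.2).card : ℚ))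
        / (((Finset.univ.filter (fun p : Fin r × Fin r => p.1 < p.2)).card : ℚ)) := by
      rw [lamRR]
      congr 1
      have h2 := two_mul_card_lt r
      have hle : r ≤ r * r := Nat.le_mul_of_pos_left r hrc
      have h3 := congrArg (Nat.cast : ℕ → ℚ) h2
      push_cast [Nat.cast_sub hle] at h3
      linarith
    rcases lt_or_gt_of_ne hne with h | h
    · have key := avg_floor_ceil (Finset.univ.filter (fun p : Fin r × Fin r => p.1 < p.2))
        (fun p : Fin r × Fin r => (rowSet (cyc n r c hn) p.1 ∩ rowSet (cyc n r c hn) p.2).card)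
        (2 * c - n) (fun p _ => rr_card hn h4 hc1 hcn p.1 p.2)
        (show ((i, i') : Fin r × Fin r) ∈ _ by simp [h])
      rw [hrw]
      exact key
    · have key := avg_floor_ceil (Finset.univ.filter (fun p : Fin r × Fin r => p.1 < p.2))
        (fun p : Fin r × Fin r => (rowSet (cyc n r c hn) p.1 ∩ rowSet (cyc n r c hn) p.2).card)
        (2 * c - n) (fun p _ => rr_card hn h4 hc1 hcn p.1 p.2)
        (show ((i', i) : Fin r × Fin r) ∈ _ by simp [h])
      rw [hrw, Finset.inter_comm]
      exact key
  · -- col-col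
    intro j j' hne
    have hrw : lamCC (cyc n r c hn) = (∑ p ∈ Finset.univ.filter
          (fun p : Fin c × Fin c => p.1 < p.2),
        ((colSet (cyc n r c hn) p.1 ∩ colSet (cyc n r c hn) p.2).card : ℚ))
        / (((Finset.univ.filter (fun p : Fin c × Fin c => p.1 < p.2)).card : ℚ)) := by
      rw [lamCC]
      congr 1
      have h2 := two_mul_card_lt c
      have hle : c ≤ c * c := Nat.le_mul_of_pos_left c hc0
      have h3 := congrArg (Nat.cast : ℕ → ℚ) h2
      push_cast [Nat.cast_sub hle] at h3
      linarith
    rcases lt_or_gt_of_ne hne with h | h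
    · have key := avg_floor_ceil (Finset.univ.filter (fun p : Fin c × Fin c => p.1 < p.2))
        (fun p : Fin c × Fin c => (colSet (cyc n r c hn) p.1 ∩ colSet (cyc n r c hn) p.2).card)
        (2 * r - n) (fun p hp => cc_card hn h4 hr2 hrn hcn
          (by simp only [mem_filter] at hp; exact hp.2.ne))
        (show ((j, j') : Fin c × Fin c) ∈ _ by simp [h])
      rw [hrw]
      exact key
    · have key := avg_floor_ceil (Finset.univ.filter (fun p : Fin c × Fin c => p.1 < p.2))
        (fun p : Fin c × Fin c => (colSet (cyc n r c hn) p.1 ∩ colSet (cyc n r c hn) p.2).card)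
        (2 * r - n) (fun p hp => cc_card hn h4 hr2 hrn hcn
          (by simp only [mem_filter] at hp; exact hp.2.ne))
        (show ((j', j) : Fin c × Fin c) ∈ _ by simp [h])
      rw [hrw, Finset.inter_comm]
      exact key


end NTAAux

/-- For any `n ≥ 4` and `k ≤ 2` there exist
`((n − k) × n, n)` and `((n − k) × (n − 1), n)`-near triple arrays. -/
theorem nearTripleArray_from_latin (n k : ℕ) (hn : 4 ≤ n) (hk : k ≤ 2) :
    (∃ T : Fin (n - k) × Fin n → Fin n, IsNearTripleArray T) ∧
    (∃ T : Fin (n - k) × Fin (n - 1) → Fin n, IsNearTripleArray T) := by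
  constructor
  · exact ⟨cyc n (n - k) n (by omega),
      cyc_isNTA hn (by omega) (by omega) (by omega) (by omega) (by omega)⟩
  · exact ⟨cyc n (n - k) (n - 1) (by omega),
      cyc_isNTA hn (by omega) (by omega) (by omega) (by omega) (by omega)⟩
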